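/- If the 0-combination L₀ of two orthogonal latin squares A₀, A₁ of order n contains a K_{3,3} pattern in six blocks with block-coordinates (I,J''),(I',J''),(I,J),(I',J'),(I'',J),(I'',J'), and a switching matrix S satisfies S(I,J'')+S(I',J'')+S(I,J)+S(I',J')+S(I'',J)+S(I'',J') = 1 in GF(2) for every such pattern, then the switched combination L_S is K_{3,3}-free. -/
import Mathlib


/-- A latin square of order `n` as a function: each row and each column is injective. -/
def IsLatin {n : ℕ} (A : Fin n → Fin n → Fin n) : Prop :=
  (∀ r, Function.Injective (A r)) ∧ (∀ c, Function.Injective (fun r => A r c))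

/-- The block coordinate of a row or column index. -/
def blk {n : ℕ} (i : Fin (2 * n)) : Fin n :=
  ⟨i.val / 2, by have := i.isLt; omega⟩

/-- The switched combination of two latin squares `A₀`, `A₁` of order `n` with switching
matrix `S`: letters of `A₀` are embedded as even numbers and letters of `A₁` as odd numbers,
and `L(i,j) = A_ε(⌊i/2⌋,⌊j/2⌋)` where `ε = 1` iff `i + j + S(⌊i/2⌋,⌊j/2⌋) ≡ 0 (mod 2)`. -/
def comb {n : ℕ} (A0 A1 : Fin n → Fin n → Fin n) (S : Fin n → Fin n → ZMod 2)
    (i j : Fin (2 * n)) : ℕ :=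
  if ((i.val : ZMod 2) + (j.val : ZMod 2) + S (blk i) (blk j) = 0)
    then 2 * (A1 (blk i) (blk j)).val + 1
    else 2 * (A0 (blk i) (blk j)).val

lemma zmod2_ne : ∀ x : ZMod 2, x ≠ 0 → x = 1 := by decide

lemma val_parity_ne {n : ℕ} {i j : Fin (2 * n)} (hb : blk i = blk j) (hne : i ≠ j) :
    (i.val : ZMod 2) ≠ (j.val : ZMod 2) := by
  intro h
  have h1 : i.val / 2 = j.val / 2 := congrArg Fin.val hb
  have h2 : i.val % 2 = j.val % 2 := (ZMod.natCast_eq_natCast_iff' _ _ 2).mp h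
  exact hne (Fin.ext (by omega))

lemma not_three_blk {n : ℕ} {i j k : Fin (2 * n)} (h1 : blk i = blk j) (h2 : blk i = blk k)
    (hij : i ≠ j) (hik : i ≠ k) (hjk : j ≠ k) : False := by
  have e1 : i.val / 2 = j.val / 2 := congrArg Fin.val h1
  have e2 : i.val / 2 = k.val / 2 := congrArg Fin.val h2
  have n1 : i.val ≠ j.val := fun h => hij (Fin.ext h)
  have n2 : i.val ≠ k.val := fun h => hik (Fin.ext h)
  have n3 : j.val ≠ k.val := fun h => hjk (Fin.ext h)
  omega

lemma comb_eq {n : ℕ} {A0 A1 : Fin n → Fin n → Fin n} {S : Fin n → Fin n → ZMod 2}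
    {r c r' c' : Fin (2 * n)}
    (h : comb A0 A1 S r c = comb A0 A1 S r' c') :
    ((r.val : ZMod 2) + (c.val : ZMod 2) + S (blk r) (blk c)
      = (r'.val : ZMod 2) + (c'.val : ZMod 2) + S (blk r') (blk c')) ∧
    ((r.val : ZMod 2) + (c.val : ZMod 2) + S (blk r) (blk c) = 0 →
        A1 (blk r) (blk c) = A1 (blk r') (blk c')) ∧
    ((r.val : ZMod 2) + (c.val : ZMod 2) + S (blk r) (blk c) ≠ 0 →
        A0 (blk r) (blk c) = A0 (blk r') (blk c')) := by
  simp only [comb] at h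
  split_ifs at h with h1 h2 h2
  · exact ⟨h1.trans h2.symm, fun _ => Fin.ext (by omega), fun hx => absurd h1 hx⟩
  · omega
  · omega
  · refine ⟨(zmod2_ne _ h1).trans (zmod2_ne _ h2).symm, fun hx => absurd hx h1,
      fun _ => Fin.ext (by omega)⟩

lemma rows_ne {n : ℕ} {A0 A1 : Fin n → Fin n → Fin n}
    (hA0 : IsLatin A0) (hA1 : IsLatin A1)
    (horth : Function.Injective (fun p : Fin n × Fin n => (A0 p.1 p.2, A1 p.1 p.2)))
    {S : Fin n → Fin n → ZMod 2}
    {r1 r2 r3 c1 c2 c3 : Fin (2 * n)}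
    (h12 : r1 ≠ r2) (h13 : r1 ≠ r3) (h23 : r2 ≠ r3)
    (g12 : c1 ≠ c2) (g13 : c1 ≠ c3) (g23 : c2 ≠ c3)
    (e1 : comb A0 A1 S r1 c2 = comb A0 A1 S r2 c1)
    (e2 : comb A0 A1 S r2 c3 = comb A0 A1 S r3 c2)
    (e3 : comb A0 A1 S r3 c1 = comb A0 A1 S r1 c3) :
    blk r1 ≠ blk r2 := by
  intro hI
  obtain ⟨p1, q1a, q1b⟩ := comb_eq e1
  obtain ⟨p2, q2a, q2b⟩ := comb_eq e2
  obtain ⟨p3, q3a, q3b⟩ := comb_eq e3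
  have hJ : blk c2 = blk c1 := by
    by_cases hx : (r1.val : ZMod 2) + (c2.val : ZMod 2) + S (blk r1) (blk c2) = 0
    · have h := q1a hx; rw [← hI] at h; exact hA1.1 _ h
    · have h := q1b hx; rw [← hI] at h; exact hA0.1 _ h
  by_cases hI3 : blk r3 = blk r2
  · have hJ3 : blk c3 = blk c2 := by
      by_cases hx : (r2.val : ZMod 2) + (c3.val : ZMod 2) + S (blk r2) (blk c3) = 0
      · have h := q2a hx; rw [hI3] at h; exact hA1.1 _ h
      · have h := q2b hx; rw [hI3] at h; exact hA0.1 _ h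
    exact not_three_blk hJ.symm (hJ3.trans hJ).symm g12 g13 g23
  · have hx23 : (r2.val : ZMod 2) + (c3.val : ZMod 2) + S (blk r2) (blk c3)
        = (r3.val : ZMod 2) + (c1.val : ZMod 2) + S (blk r3) (blk c1) := by
      by_contra hne
      apply hI3
      have horth' : ((blk r2 : Fin n), (blk c3 : Fin n)) = (blk r3, blk c1) := by
        apply horth
        rcases eq_or_ne ((r2.val : ZMod 2) + (c3.val : ZMod 2) + S (blk r2) (blk c3)) 0
          with h0 | h0
        · have h1 : (r3.val : ZMod 2) + (c1.val : ZMod 2) + S (blk r3) (blk c1) ≠ 0 :=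
            fun h => hne (h0.trans h.symm)
          have hhA1 := q2a h0
          have hhA0 := q3b h1
          rw [hI] at hhA0
          rw [hJ] at hhA1
          exact Prod.ext hhA0.symm hhA1
        · have h1 : (r3.val : ZMod 2) + (c1.val : ZMod 2) + S (blk r3) (blk c1) = 0 := by
            by_contra h1
            exact hne ((zmod2_ne _ h0).trans (zmod2_ne _ h1).symm)
          have hhA1 := q3a h1
          have hhA0 := q2b h0
          rw [hI] at hhA1
          rw [hJ] at hhA0
          exact Prod.ext hhA0 hhA1.symm
      exact (Prod.ext_iff.mp horth').1.symm
    rw [hJ] at p2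
    have hcc : (c2.val : ZMod 2) = (c1.val : ZMod 2) := by linear_combination p2.symm.trans hx23
    exact val_parity_ne hJ g12.symm hcc

lemma comb_transpose {n : ℕ} (A0 A1 : Fin n → Fin n → Fin n) (S : Fin n → Fin n → ZMod 2)
    (i j : Fin (2 * n)) :
    comb (fun a b => A0 b a) (fun a b => A1 b a) (fun a b => S b a) j i
      = comb A0 A1 S i j := by
  have h : ((j.val : ZMod 2) + (i.val : ZMod 2) + S (blk i) (blk j))
      = ((i.val : ZMod 2) + (j.val : ZMod 2) + S (blk i) (blk j)) := by ring
  simp only [comb, h]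

def mk2 {n : ℕ} (I : Fin n) (p : ZMod 2) : Fin (2 * n) :=
  ⟨2 * I.val + p.val, by have h1 := I.isLt; have h2 : p.val < 2 := ZMod.val_lt p; omega⟩

lemma blk_mk2 {n : ℕ} (I : Fin n) (p : ZMod 2) : blk (mk2 I p) = I := by
  have h2 : p.val < 2 := ZMod.val_lt p
  exact Fin.ext (show (2 * I.val + p.val) / 2 = I.val by omega)

lemma cast_mk2 {n : ℕ} (I : Fin n) (p : ZMod 2) : (((mk2 I p).val : ℕ) : ZMod 2) = p := by
  show ((2 * I.val + p.val : ℕ) : ZMod 2) = p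
  push_cast
  rw [ZMod.natCast_rightInverse p, show (2 : ZMod 2) = 0 by decide]
  ring

lemma mk2_ne {n : ℕ} {I I' : Fin n} (h : I ≠ I') (p p' : ZMod 2) : mk2 I p ≠ mk2 I' p' := by
  intro hc
  apply h
  have hv : 2 * I.val + p.val = 2 * I'.val + p'.val := congrArg Fin.val hc
  have h2 : p.val < 2 := ZMod.val_lt p
  have h2' : p'.val < 2 := ZMod.val_lt p'
  exact Fin.ext (by omega)

lemma comb0_eq {n : ℕ} (A0 A1 : Fin n → Fin n → Fin n) (I I' J J' : Fin n)
    (p q p' q' : ZMod 2) (hpq : p + q = p' + q')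
    (hA1 : p + q = 0 → A1 I J = A1 I' J')
    (hA0 : p + q ≠ 0 → A0 I J = A0 I' J') :
    comb A0 A1 (fun _ _ => 0) (mk2 I p) (mk2 J q)
      = comb A0 A1 (fun _ _ => 0) (mk2 I' p') (mk2 J' q') := by
  simp only [comb, cast_mk2, blk_mk2, add_zero]
  by_cases h : p + q = 0
  · rw [if_pos h, if_pos (hpq ▸ h), hA1 h]
  · rw [if_neg h, if_neg (hpq ▸ h), hA0 h]

/-- If for every `K_{3,3}` pattern of the 0-combination of two orthogonal latin squares the
switching matrix `S` sums to `1` over the six corresponding block positions, then the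
switched combination `L_S` is `K_{3,3}`-free. -/
theorem stmt12 {n : ℕ} (A0 A1 : Fin n → Fin n → Fin n)
    (hA0 : IsLatin A0) (hA1 : IsLatin A1)
    (horth : Function.Injective (fun p : Fin n × Fin n => (A0 p.1 p.2, A1 p.1 p.2)))
    (S : Fin n → Fin n → ZMod 2)
    (hS : ∀ r1 r2 r3 c1 c2 c3 : Fin (2 * n),
      r1 ≠ r2 → r1 ≠ r3 → r2 ≠ r3 → c1 ≠ c2 → c1 ≠ c3 → c2 ≠ c3 →
      comb A0 A1 (fun _ _ => 0) r1 c2 = comb A0 A1 (fun _ _ => 0) r2 c1 →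
      comb A0 A1 (fun _ _ => 0) r2 c3 = comb A0 A1 (fun _ _ => 0) r3 c2 →
      comb A0 A1 (fun _ _ => 0) r3 c1 = comb A0 A1 (fun _ _ => 0) r1 c3 →
      S (blk r1) (blk c2) + S (blk r2) (blk c3) + S (blk r3) (blk c1) +
        S (blk r2) (blk c1) + S (blk r3) (blk c2) + S (blk r1) (blk c3) = 1) :
    ¬ ∃ r1 r2 r3 c1 c2 c3 : Fin (2 * n),
      r1 ≠ r2 ∧ r1 ≠ r3 ∧ r2 ≠ r3 ∧ c1 ≠ c2 ∧ c1 ≠ c3 ∧ c2 ≠ c3 ∧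
      comb A0 A1 S r1 c2 = comb A0 A1 S r2 c1 ∧
      comb A0 A1 S r2 c3 = comb A0 A1 S r3 c2 ∧
      comb A0 A1 S r3 c1 = comb A0 A1 S r1 c3 := by
  rintro ⟨r1, r2, r3, c1, c2, c3, h12, h13, h23, g12, g13, g23, e1, e2, e3⟩
  have h2 : (2 : ZMod 2) = 0 := by decide
  -- distinctness of row blocks
  have hR12 : blk r1 ≠ blk r2 := rows_ne hA0 hA1 horth h12 h13 h23 g12 g13 g23 e1 e2 e3
  have hR23 : blk r2 ≠ blk r3 :=
    rows_ne hA0 hA1 horth h23 h12.symm h13.symm g23 g12.symm g13.symm e2 e3 e1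
  have hR31 : blk r3 ≠ blk r1 :=
    rows_ne hA0 hA1 horth h13.symm h23.symm h12 g13.symm g23.symm g12 e3 e1 e2
  -- transposed data for column blocks
  have hA0t : IsLatin (fun a b => A0 b a) := ⟨fun r => hA0.2 r, fun c => hA0.1 c⟩
  have hA1t : IsLatin (fun a b => A1 b a) := ⟨fun r => hA1.2 r, fun c => hA1.1 c⟩
  have horth' : Function.Injective
      (fun p : Fin n × Fin n => ((fun a b => A0 b a) p.1 p.2, (fun a b => A1 b a) p.1 p.2)) := by
    intro p q h
    have hh := horth (a₁ := (p.2, p.1)) (a₂ := (q.2, q.1)) h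
    exact Prod.ext (congrArg Prod.snd hh) (congrArg Prod.fst hh)
  have te1 := (comb_transpose A0 A1 S r2 c1).trans (e1.symm.trans (comb_transpose A0 A1 S r1 c2).symm)
  have te2 := (comb_transpose A0 A1 S r3 c2).trans (e2.symm.trans (comb_transpose A0 A1 S r2 c3).symm)
  have te3 := (comb_transpose A0 A1 S r1 c3).trans (e3.symm.trans (comb_transpose A0 A1 S r3 c1).symm)
  have hC12 : blk c1 ≠ blk c2 :=
    rows_ne hA0t hA1t horth' g12 g13 g23 h12 h13 h23 te1 te2 te3
  have hC23 : blk c2 ≠ blk c3 :=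
    rows_ne hA0t hA1t horth' g23 g12.symm g13.symm h23 h12.symm h13.symm te2 te3 te1
  have hC31 : blk c3 ≠ blk c1 :=
    rows_ne hA0t hA1t horth' g13.symm g23.symm g12 h13.symm h23.symm h12 te3 te1 te2
  -- parity and letter information
  obtain ⟨p1, q1a, q1b⟩ := comb_eq e1
  obtain ⟨p2, q2a, q2b⟩ := comb_eq e2
  obtain ⟨p3, q3a, q3b⟩ := comb_eq e3
  set x1 := (r1.val : ZMod 2) + (c2.val : ZMod 2) + S (blk r1) (blk c2) with hx1def
  set x2 := (r2.val : ZMod 2) + (c3.val : ZMod 2) + S (blk r2) (blk c3) with hx2def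
  set x3 := (r3.val : ZMod 2) + (c1.val : ZMod 2) + S (blk r3) (blk c1) with hx3def
  clear_value x1 x2 x3
  -- construct the K33 pattern of the 0-combination
  have f1 := comb0_eq A0 A1 (blk r1) (blk r2) (blk c2) (blk c1) 0 x1 (x2 + x3) (x1 + x2 + x3)
    (by linear_combination -(x2 + x3) * h2)
    (fun h => q1a (by linear_combination h))
    (fun h => q1b (fun hx => h (by linear_combination hx)))
  have f2 := comb0_eq A0 A1 (blk r2) (blk r3) (blk c3) (blk c2) (x2 + x3) x3 (x1 + x2) x1
    (by linear_combination (x3 - x1) * h2)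
    (fun h => q2a (by linear_combination h - x3 * h2))
    (fun h => q2b (fun hx => h (by linear_combination hx + x3 * h2)))
  have f3 := comb0_eq A0 A1 (blk r3) (blk r1) (blk c1) (blk c3) (x1 + x2) (x1 + x2 + x3) 0 x3
    (by linear_combination (x1 + x2) * h2)
    (fun h => q3a (by linear_combination h - (x1 + x2) * h2))
    (fun h => q3b (fun hx => h (by linear_combination hx + (x1 + x2) * h2)))
  have hsum := hS (mk2 (blk r1) 0) (mk2 (blk r2) (x2 + x3)) (mk2 (blk r3) (x1 + x2))
      (mk2 (blk c1) (x1 + x2 + x3)) (mk2 (blk c2) x1) (mk2 (blk c3) x3)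
      (mk2_ne hR12 _ _) (mk2_ne (Ne.symm hR31) _ _) (mk2_ne hR23 _ _)
      (mk2_ne hC12 _ _) (mk2_ne (Ne.symm hC31) _ _) (mk2_ne hC23 _ _)
      f1 f2 f3
  simp only [blk_mk2] at hsum
  have hfin : (0 : ZMod 2) = 1 := by
    linear_combination hsum - (p1 - hx1def) - (p2 - hx2def) - (p3 - hx3def) -
      (S (blk r2) (blk c1) + S (blk r3) (blk c2) + S (blk r1) (blk c3)) * h2
  exact absurd hfin (by decide)
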